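/- Let κ be an uncountable cardinal. Then any two κ-existentially closed groups of cardinality κ are isomorphic. -/

import Mathlib

universe u

/-- `G` is `κ`-existentially closed: every system of fewer than `κ` equations and fewer than
`κ` inequations (words in the free product of `G` with free variables `X`), which has a
solution in some overgroup of `G`, already has a solution in `G`. -/
def IsKappaEC (κ : Cardinal.{u}) (G : Type u) [Group G] : Prop :=
  ∀ (X : Type u) (eqs ineqs : Set (FreeGroup (G ⊕ X))),
    Cardinal.mk eqs < κ → Cardinal.mk ineqs < κ →
    (∃ (H : Type u) (_ : Group H) (i : G →* H), Function.Injective i ∧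
      ∃ v : X → H,
        (∀ w ∈ eqs, FreeGroup.lift (Sum.elim (⇑i) v) w = 1) ∧
        (∀ w ∈ ineqs, FreeGroup.lift (Sum.elim (⇑i) v) w ≠ 1)) →
    ∃ v : X → G,
      (∀ w ∈ eqs, FreeGroup.lift (Sum.elim (id : G → G) v) w = 1) ∧
      (∀ w ∈ ineqs, FreeGroup.lift (Sum.elim (id : G → G) v) w ≠ 1)

namespace Stmt8

open Cardinal

/-! ### Generic `FreeGroup` helper lemmas -/

theorem lift_map {α β M : Type*} [Group M] (f : α → β) (g : β → M) (w : FreeGroup α) :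
    FreeGroup.lift g (FreeGroup.map f w) = FreeGroup.lift (fun a => g (f a)) w := by
  have h : (FreeGroup.lift g).comp (FreeGroup.map f) = FreeGroup.lift (fun a => g (f a)) :=
    FreeGroup.ext_hom _ _ (fun a => by simp)
  exact DFunLike.congr_fun h w

theorem freeGroup_eq_one_of_isEmpty {α : Type*} [IsEmpty α] (w : FreeGroup α) : w = 1 := by
  induction w using FreeGroup.induction_on with
  | C1 => rfl
  | of x => exact isEmptyElim x
  | inv_of x _ => exact isEmptyElim x
  | mul x y hx hy => rw [hx, hy, one_mul]

theorem mk_freeGroup_lt {α : Type u} {κ : Cardinal.{u}} (hκ : ℵ₀ < κ) (hα : #α < κ) :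
    #(FreeGroup α) < κ := by
  have hs : Function.Surjective (FreeGroup.mk : List (α × Bool) → FreeGroup α) := by
    rintro ⟨L⟩; exact ⟨L, rfl⟩
  have h1 : #(FreeGroup α) ≤ #(List (α × Bool)) := Cardinal.mk_le_of_surjective hs
  have h2 : #(List (α × Bool)) ≤ max ℵ₀ #(α × Bool) := Cardinal.mk_list_le_max _
  have h3 : #(α × Bool) = #α + #α := by
    rw [Cardinal.mk_congr ((Equiv.prodComm α Bool).trans (Equiv.boolProdEquivSum α)),
      Cardinal.mk_sum, Cardinal.lift_id]
  have h4 : #(α × Bool) < κ := by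
    rw [h3]; exact Cardinal.add_lt_of_lt hκ.le hα hα
  exact lt_of_le_of_lt (h1.trans h2) (max_lt hκ h4)

/-! ### Good relations -/

variable {G H : Type u} [Group G] [Group H]

/-- A relation `R ⊆ G × H` is *good* if every word in the pairs of `R` evaluates to `1` on the
first coordinates iff it evaluates to `1` on the second coordinates. -/
def GoodRel (R : Set (G × H)) : Prop :=
  ∀ w : FreeGroup R,
    FreeGroup.lift (fun p : R => (p : G × H).1) w = 1 ↔
      FreeGroup.lift (fun p : R => (p : G × H).2) w = 1

theorem goodRel_empty : GoodRel (∅ : Set (G × H)) := by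
  intro w
  haveI : IsEmpty (↥(∅ : Set (G × H))) := ⟨by rintro ⟨x, hx⟩; exact hx⟩
  rw [freeGroup_eq_one_of_isEmpty w]
  simp

theorem exists_preimage_word {α : Type*} {ι : Type*} [Nonempty ι] {S : ι → Set α}
    (hdir : Directed (· ⊆ ·) S) (w : FreeGroup (↥(⋃ i, S i))) :
    ∃ (i : ι) (u : FreeGroup (S i)),
      FreeGroup.map (Set.inclusion (Set.subset_iUnion S i)) u = w := by
  induction w using FreeGroup.induction_on with
  | C1 => exact ⟨Classical.arbitrary ι, 1, map_one _⟩
  | of x =>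
      obtain ⟨i, hi⟩ := Set.mem_iUnion.mp x.2
      refine ⟨i, FreeGroup.of ⟨x.1, hi⟩, ?_⟩
      show FreeGroup.map _ (FreeGroup.of _) = FreeGroup.of x
      rw [FreeGroup.map.of]
  | inv_of x ih =>
      obtain ⟨i, u, hu⟩ := ih
      exact ⟨i, u⁻¹, by rw [map_inv, hu]⟩
  | mul x y hx hy =>
      obtain ⟨i, u, hu⟩ := hx
      obtain ⟨j, v, hv⟩ := hy
      obtain ⟨k, hik, hjk⟩ := hdir i j
      refine ⟨k, FreeGroup.map (Set.inclusion hik) u * FreeGroup.map (Set.inclusion hjk) v, ?_⟩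
      rw [map_mul, ← hu, ← hv]
      congr 1
      · rw [FreeGroup.map.comp]; rfl
      · rw [FreeGroup.map.comp]; rfl

theorem goodRel_iUnion {ι : Type*} {R : ι → Set (G × H)} (hdir : Directed (· ⊆ ·) R)
    (h : ∀ i, GoodRel (R i)) : GoodRel (⋃ i, R i) := by
  rcases isEmpty_or_nonempty ι with hι | hι
  · have he : (⋃ i, R i) = (∅ : Set (G × H)) := by simp
    exact he ▸ goodRel_empty
  · intro w
    obtain ⟨i, u, rfl⟩ := exists_preimage_word hdir w
    rw [lift_map, lift_map]
    exact h i u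

/-! ### Overgroup via amalgamated products -/

theorem exists_overgroup {R : Set (G × H)} (hR : GoodRel R) :
    ∃ (K : Type u) (_ : Group K) (i : H →* K) (j : G →* K),
      Function.Injective i ∧ Function.Injective j ∧
        ∀ p : R, i ((p : G × H).2) = j ((p : G × H).1) := by
  classical
  set liftG : FreeGroup R →* G := FreeGroup.lift fun p : R => (p : G × H).1 with hliftG
  set liftH : FreeGroup R →* H := FreeGroup.lift fun p : R => (p : G × H).2 with hliftH
  have hker : ∀ w : FreeGroup R, w ∈ liftG.ker ↔ liftH w = 1 := fun w =>
    Iff.trans MonoidHom.mem_ker (hR w)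
  set φG : FreeGroup R ⧸ liftG.ker →* G := QuotientGroup.kerLift liftG with hφG
  set φH : FreeGroup R ⧸ liftG.ker →* H :=
    QuotientGroup.lift liftG.ker liftH (fun w hw => MonoidHom.mem_ker.mpr ((hker w).mp hw))
    with hφH
  have hφGinj : Function.Injective φG := QuotientGroup.kerLift_injective liftG
  have hφHinj : Function.Injective φH := by
    rw [injective_iff_map_eq_one]
    intro x hx
    obtain ⟨w, rfl⟩ := QuotientGroup.mk_surjective x
    rw [hφH, QuotientGroup.lift_mk'] at hx
    exact (QuotientGroup.eq_one_iff w).mpr ((hker w).mpr hx)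
  set Gf : Bool → Type u := fun b => cond b H G with hGf
  letI instGf : ∀ b, Group (Gf b) := fun b =>
    Bool.casesOn (motive := fun b => Group (Gf b)) b
      (inferInstance : Group G) (inferInstance : Group H)
  set φf : ∀ b, (FreeGroup R ⧸ liftG.ker) →* Gf b := fun b =>
    Bool.casesOn (motive := fun b => (FreeGroup R ⧸ liftG.ker) →* Gf b) b φG φH with hφf
  have hinj : ∀ b, Function.Injective (φf b) := fun b => by
    cases b
    · exact hφGinj
    · exact hφHinj
  refine ⟨Monoid.PushoutI φf, inferInstance,
    Monoid.PushoutI.of (φ := φf) true, Monoid.PushoutI.of (φ := φf) false,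
    Monoid.PushoutI.of_injective hinj true, Monoid.PushoutI.of_injective hinj false, ?_⟩
  intro p
  have h2 : (p : G × H).2 = φH (QuotientGroup.mk (FreeGroup.of p)) := by
    rw [hφH, QuotientGroup.lift_mk', hliftH, FreeGroup.lift_apply_of]
  have h1 : (p : G × H).1 = φG (QuotientGroup.mk (FreeGroup.of p)) := by
    rw [hφG]
    rw [show QuotientGroup.kerLift liftG (QuotientGroup.mk (FreeGroup.of p))
      = liftG (FreeGroup.of p) from QuotientGroup.kerLift_mk _ _]
    rw [hliftG, FreeGroup.lift_apply_of]
  rw [h1, h2]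
  exact (Monoid.PushoutI.of_apply_eq_base φf true _).trans
    (Monoid.PushoutI.of_apply_eq_base φf false _).symm

/-! ### The extension lemmas -/

theorem extend_right {κ : Cardinal.{u}} (hκ : ℵ₀ < κ) (hH : IsKappaEC κ H)
    {R : Set (G × H)} (hR : GoodRel R) (hcard : #R < κ) (g : G) :
    ∃ h : H, GoodRel (insert (g, h) R) := by
  classical
  obtain ⟨K, _, iH, iG, hiH, hiG, hcomm⟩ := exists_overgroup hR
  set evalG : FreeGroup (R ⊕ PUnit.{u + 1}) →* G :=
    FreeGroup.lift (Sum.elim (fun p : R => (p : G × H).1) fun _ => g) with hevalG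
  set Φ : FreeGroup (R ⊕ PUnit.{u + 1}) →* FreeGroup (H ⊕ PUnit.{u + 1}) :=
    FreeGroup.map (Sum.map (fun p : R => (p : G × H).2) id) with hΦ
  have hsum : #(R ⊕ PUnit.{u + 1}) < κ := by
    rw [Cardinal.mk_sum, Cardinal.lift_id, Cardinal.lift_id, Cardinal.mk_punit]
    exact Cardinal.add_lt_of_lt hκ.le hcard (lt_trans Cardinal.one_lt_aleph0 hκ)
  have hfg : #(FreeGroup (R ⊕ PUnit.{u + 1})) < κ := mk_freeGroup_lt hκ hsum
  have hhom : (FreeGroup.lift (Sum.elim (⇑iH) (fun _ : PUnit.{u + 1} => iG g))).comp Φ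
      = iG.comp evalG := by
    apply FreeGroup.ext_hom
    rintro (p | x)
    · simp [hΦ, hevalG, hcomm p]
    · simp [hΦ, hevalG]
  have hcompose : ∀ w : FreeGroup (R ⊕ PUnit.{u + 1}),
      FreeGroup.lift (Sum.elim (⇑iH) (fun _ : PUnit.{u + 1} => iG g)) (Φ w) = iG (evalG w) := by
    intro w
    have := DFunLike.congr_fun hhom w
    simpa using this
  have hkey : ∃ v : PUnit.{u + 1} → H,
      (∀ w' ∈ Φ '' {w | evalG w = 1}, FreeGroup.lift (Sum.elim (id : H → H) v) w' = 1) ∧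
      (∀ w' ∈ Φ '' {w | evalG w ≠ 1}, FreeGroup.lift (Sum.elim (id : H → H) v) w' ≠ 1) := by
    refine hH PUnit.{u + 1} (Φ '' {w | evalG w = 1}) (Φ '' {w | evalG w ≠ 1})
      (lt_of_le_of_lt (Cardinal.mk_image_le.trans (Cardinal.mk_set_le _)) hfg)
      (lt_of_le_of_lt (Cardinal.mk_image_le.trans (Cardinal.mk_set_le _)) hfg)
      ⟨K, ‹Group K›, iH, hiH, fun _ => iG g, ?_, ?_⟩
    · rintro w' ⟨w, hw, rfl⟩
      rw [hcompose w, show evalG w = 1 from hw, map_one]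
    · rintro w' ⟨w, hw, rfl⟩
      rw [hcompose w]
      intro hc
      exact hw (hiG (by simpa using hc))
  obtain ⟨v, hv1, hv2⟩ := hkey
  refine ⟨v PUnit.unit, ?_⟩
  have hcoef : (fun a => Sum.elim (id : H → H) v
      (Sum.map (fun p : R => (p : G × H).2) id a))
      = Sum.elim (fun p : R => (p : G × H).2) v := funext (by rintro (p | x) <;> rfl)
  have main : ∀ w : FreeGroup (R ⊕ PUnit.{u + 1}),
      evalG w = 1 ↔ FreeGroup.lift (Sum.elim (fun p : R => (p : G × H).2) v) w = 1 := by
    intro w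
    constructor
    · intro h1
      have := hv1 (Φ w) ⟨w, h1, rfl⟩
      rwa [hΦ, lift_map, hcoef] at this
    · intro h1
      by_contra hne
      refine hv2 (Φ w) ⟨w, hne, rfl⟩ ?_
      rw [hΦ, lift_map, hcoef]
      exact h1
  intro w
  set θ : ↥(insert (g, v PUnit.unit) R) → R ⊕ PUnit.{u + 1} := fun p =>
    if hp : (p : G × H) ∈ R then Sum.inl ⟨p, hp⟩ else Sum.inr PUnit.unit with hθ
  have hmem : ∀ p : ↥(insert (g, v PUnit.unit) R), (p : G × H) ∉ R →
      (p : G × H) = (g, v PUnit.unit) := by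
    intro p hp
    rcases p.2 with h | h
    · exact h
    · exact absurd h hp
  have hθ1 : ∀ p, Sum.elim (fun q : R => (q : G × H).1) (fun _ => g) (θ p) = (p : G × H).1 := by
    intro p
    by_cases hp : (p : G × H) ∈ R
    · simp [hθ, hp]
    · simp only [hθ]
      rw [dif_neg hp, hmem p hp]
      rfl
  have hθ2 : ∀ p, Sum.elim (fun q : R => (q : G × H).2) v (θ p) = (p : G × H).2 := by
    intro p
    by_cases hp : (p : G × H) ∈ R
    · simp [hθ, hp]
    · simp only [hθ]
      rw [dif_neg hp, hmem p hp]
      rfl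
  have e1 : FreeGroup.lift (fun p : ↥(insert (g, v PUnit.unit) R) => (p : G × H).1) w
      = evalG (FreeGroup.map θ w) := by
    rw [hevalG, lift_map]
    exact (congrArg (fun f => FreeGroup.lift f w) (funext hθ1)).symm
  have e2 : FreeGroup.lift (fun p : ↥(insert (g, v PUnit.unit) R) => (p : G × H).2) w
      = FreeGroup.lift (Sum.elim (fun p : R => (p : G × H).2) v) (FreeGroup.map θ w) := by
    rw [lift_map]
    exact (congrArg (fun f => FreeGroup.lift f w) (funext hθ2)).symm
  rw [e1, e2]
  exact main (FreeGroup.map θ w)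

/-! ### Swapping -/

def swapRel (R : Set (G × H)) : Set (H × G) := Prod.swap ⁻¹' R

theorem goodRel_swapRel {R : Set (G × H)} (hR : GoodRel R) : GoodRel (swapRel R) := by
  intro w
  have h1 : FreeGroup.lift (fun p : ↥(swapRel R) => (p : H × G).1) w
      = FreeGroup.lift (fun p : R => (p : G × H).2)
          (FreeGroup.map (fun q : ↥(swapRel R) => (⟨(q : H × G).swap, q.2⟩ : R)) w) := by
    rw [lift_map]
    exact congrArg (fun f => FreeGroup.lift f w) (funext fun a => rfl)
  have h2 : FreeGroup.lift (fun p : ↥(swapRel R) => (p : H × G).2) w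
      = FreeGroup.lift (fun p : R => (p : G × H).1)
          (FreeGroup.map (fun q : ↥(swapRel R) => (⟨(q : H × G).swap, q.2⟩ : R)) w) := by
    rw [lift_map]
    exact congrArg (fun f => FreeGroup.lift f w) (funext fun a => rfl)
  rw [h1, h2]
  exact (hR _).symm

theorem swapRel_swapRel (R : Set (G × H)) : swapRel (swapRel R) = R := by
  ext p; simp [swapRel]

theorem swapRel_insert (R : Set (G × H)) (g : G) (h : H) :
    swapRel (insert (g, h) R) = insert (h, g) (swapRel R) := by
  ext ⟨a, b⟩
  simp [swapRel, Set.mem_insert_iff, Prod.ext_iff, and_comm]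

theorem mk_swapRel (R : Set (G × H)) : #(swapRel R) = #R :=
  Cardinal.mk_congr
    ⟨fun q => ⟨(q : H × G).swap, q.2⟩,
     fun p => ⟨(p : G × H).swap, by simpa [swapRel] using p.2⟩,
     fun q => Subtype.ext (Prod.swap_swap _), fun p => Subtype.ext (Prod.swap_swap _)⟩

theorem extend_left {κ : Cardinal.{u}} (hκ : ℵ₀ < κ) (hG : IsKappaEC κ G)
    {R : Set (G × H)} (hR : GoodRel R) (hcard : #R < κ) (h : H) :
    ∃ g : G, GoodRel (insert (g, h) R) := by
  obtain ⟨gw, hgw⟩ := extend_right hκ hG (goodRel_swapRel hR)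
    (by rw [mk_swapRel]; exact hcard) h
  refine ⟨gw, ?_⟩
  have h2 := goodRel_swapRel hgw
  rwa [swapRel_insert, swapRel_swapRel] at h2

/-! ### Transfinite construction -/

open Classical in
noncomputable def stepPair (κ : Cardinal.{u}) (hκ : ℵ₀ < κ) (hG : IsKappaEC κ G)
    (hH : IsKappaEC κ H) (R : Set (G × H)) : G ⊕ H → G × H
  | Sum.inl g =>
      (g, if hyp : GoodRel R ∧ #R < κ then
        Classical.choose (extend_right hκ hH hyp.1 hyp.2 g) else 1)
  | Sum.inr h =>
      (if hyp : GoodRel R ∧ #R < κ then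
        Classical.choose (extend_left hκ hG hyp.1 hyp.2 h) else 1, h)

open Classical in
noncomputable def step (κ : Cardinal.{u}) (hκ : ℵ₀ < κ) (hG : IsKappaEC κ G)
    (hH : IsKappaEC κ H) (R : Set (G × H)) (x : G ⊕ H) : Set (G × H) :=
  if GoodRel R ∧ #R < κ then insert (stepPair κ hκ hG hH R x) R else R

theorem subset_step (κ : Cardinal.{u}) (hκ : ℵ₀ < κ) (hG : IsKappaEC κ G)
    (hH : IsKappaEC κ H) (R : Set (G × H)) (x : G ⊕ H) : R ⊆ step κ hκ hG hH R x := by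
  unfold step
  split
  · exact Set.subset_insert _ _
  · exact subset_rfl

theorem step_subset (κ : Cardinal.{u}) (hκ : ℵ₀ < κ) (hG : IsKappaEC κ G)
    (hH : IsKappaEC κ H) (R : Set (G × H)) (x : G ⊕ H) :
    step κ hκ hG hH R x ⊆ insert (stepPair κ hκ hG hH R x) R := by
  unfold step
  split
  · exact subset_rfl
  · exact Set.subset_insert _ _

theorem goodRel_step (κ : Cardinal.{u}) (hκ : ℵ₀ < κ) (hG : IsKappaEC κ G)
    (hH : IsKappaEC κ H) {R : Set (G × H)} (h1 : GoodRel R) (h2 : #R < κ) (x : G ⊕ H) :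
    GoodRel (step κ hκ hG hH R x) := by
  unfold step
  rw [if_pos (⟨h1, h2⟩ : GoodRel R ∧ #R < κ)]
  cases x with
  | inl g =>
      simp only [stepPair]
      rw [dif_pos (⟨h1, h2⟩ : GoodRel R ∧ #R < κ)]
      exact Classical.choose_spec (extend_right hκ hH h1 h2 g)
  | inr h =>
      simp only [stepPair]
      rw [dif_pos (⟨h1, h2⟩ : GoodRel R ∧ #R < κ)]
      exact Classical.choose_spec (extend_left hκ hG h1 h2 h)

theorem mem_step_left (κ : Cardinal.{u}) (hκ : ℵ₀ < κ) (hG : IsKappaEC κ G)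
    (hH : IsKappaEC κ H) {R : Set (G × H)} (h1 : GoodRel R) (h2 : #R < κ) (g : G) :
    ∃ h, (g, h) ∈ step κ hκ hG hH R (Sum.inl g) := by
  unfold step
  rw [if_pos (⟨h1, h2⟩ : GoodRel R ∧ #R < κ)]
  simp only [stepPair]
  exact ⟨_, Set.mem_insert _ _⟩

theorem mem_step_right (κ : Cardinal.{u}) (hκ : ℵ₀ < κ) (hG : IsKappaEC κ G)
    (hH : IsKappaEC κ H) {R : Set (G × H)} (h1 : GoodRel R) (h2 : #R < κ) (h : H) :
    ∃ g, (g, h) ∈ step κ hκ hG hH R (Sum.inr h) := by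
  unfold step
  rw [if_pos (⟨h1, h2⟩ : GoodRel R ∧ #R < κ)]
  simp only [stepPair]
  exact ⟨_, Set.mem_insert _ _⟩

noncomputable def chain (κ : Cardinal.{u}) (hκ : ℵ₀ < κ) (hG : IsKappaEC κ G)
    (hH : IsKappaEC κ H) (e : κ.ord.ToType → G ⊕ H) (i : κ.ord.ToType) : Set (G × H) :=
  step κ hκ hG hH
    (⋃ j : {j : κ.ord.ToType // j < i}, chain κ hκ hG hH e j.1) (e i)
termination_by i
decreasing_by exact j.2

/-- The union of all earlier stages. -/
noncomputable def uStage (κ : Cardinal.{u}) (hκ : ℵ₀ < κ) (hG : IsKappaEC κ G)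
    (hH : IsKappaEC κ H) (e : κ.ord.ToType → G ⊕ H) (i : κ.ord.ToType) : Set (G × H) :=
  ⋃ j : {j : κ.ord.ToType // j < i}, chain κ hκ hG hH e j.1

theorem chain_eq (κ : Cardinal.{u}) (hκ : ℵ₀ < κ) (hG : IsKappaEC κ G)
    (hH : IsKappaEC κ H) (e : κ.ord.ToType → G ⊕ H) (i : κ.ord.ToType) :
    chain κ hκ hG hH e i = step κ hκ hG hH (uStage κ hκ hG hH e i) (e i) := by
  conv_lhs => rw [chain]
  rfl

theorem chain_mono (κ : Cardinal.{u}) (hκ : ℵ₀ < κ) (hG : IsKappaEC κ G)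
    (hH : IsKappaEC κ H) (e : κ.ord.ToType → G ⊕ H) {j i : κ.ord.ToType} (hji : j ≤ i) :
    chain κ hκ hG hH e j ⊆ chain κ hκ hG hH e i := by
  rcases eq_or_lt_of_le hji with rfl | hlt
  · exact subset_rfl
  · have h1 : chain κ hκ hG hH e j ⊆ uStage κ hκ hG hH e i :=
      Set.subset_iUnion (fun j : {j : κ.ord.ToType // j < i} => chain κ hκ hG hH e j.1) ⟨j, hlt⟩
    rw [chain_eq κ hκ hG hH e i]
    exact h1.trans (subset_step _ _ _ _ _ _)

theorem mk_Iio_lt (κ : Cardinal.{u}) (i : κ.ord.ToType) : #{j : κ.ord.ToType // j < i} < κ := by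
  haveI : IsWellOrder κ.ord.ToType (· < ·) := isWellOrder_lt
  rw [← Ordinal.card_typein (r := ((· < ·) : κ.ord.ToType → κ.ord.ToType → Prop)) i]
  exact Cardinal.lt_ord.mp (Ordinal.typein_lt_self i)

theorem mk_Iic_lt (κ : Cardinal.{u}) (hκ : ℵ₀ < κ) (i : κ.ord.ToType) :
    #(Set.Iic i) < κ := by
  rw [← Set.Iio_insert]
  refine lt_of_le_of_lt Cardinal.mk_insert_le ?_
  refine Cardinal.add_lt_of_lt hκ.le ?_ (lt_trans Cardinal.one_lt_aleph0 hκ)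
  have h1 : #(Set.Iio i) = #{j : κ.ord.ToType // j < i} :=
    Cardinal.mk_congr (Equiv.subtypeEquivRight (fun _ => Iff.rfl))
  rw [h1]
  exact mk_Iio_lt κ i

theorem chain_subset_pairs (κ : Cardinal.{u}) (hκ : ℵ₀ < κ) (hG : IsKappaEC κ G)
    (hH : IsKappaEC κ H) (e : κ.ord.ToType → G ⊕ H) (i : κ.ord.ToType) :
    chain κ hκ hG hH e i ⊆
      (fun j => stepPair κ hκ hG hH (uStage κ hκ hG hH e j) (e j)) '' Set.Iic i := by
  induction i using WellFoundedLT.induction with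
  | _ i IH =>
      intro q hq
      rw [chain_eq] at hq
      rcases step_subset κ hκ hG hH _ _ hq with hq1 | hq2
      · exact ⟨i, Set.self_mem_Iic, hq1.symm⟩
      · obtain ⟨j, hj⟩ := Set.mem_iUnion.mp hq2
        obtain ⟨k, hk, hkq⟩ := IH j.1 j.2 hj
        exact ⟨k, le_of_lt (lt_of_le_of_lt hk j.2), hkq⟩

theorem uStage_card (κ : Cardinal.{u}) (hκ : ℵ₀ < κ) (hG : IsKappaEC κ G)
    (hH : IsKappaEC κ H) (e : κ.ord.ToType → G ⊕ H) (i : κ.ord.ToType) :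
    #(uStage κ hκ hG hH e i) < κ := by
  have hsub : uStage κ hκ hG hH e i ⊆
      (fun j => stepPair κ hκ hG hH (uStage κ hκ hG hH e j) (e j)) '' Set.Iic i := by
    intro q hq
    obtain ⟨j, hj⟩ := Set.mem_iUnion.mp hq
    obtain ⟨k, hk, hkq⟩ := chain_subset_pairs κ hκ hG hH e j.1 hj
    exact ⟨k, le_of_lt (lt_of_le_of_lt hk j.2), hkq⟩
  refine lt_of_le_of_lt ((Cardinal.mk_le_mk_of_subset hsub).trans Cardinal.mk_image_le) ?_
  exact mk_Iic_lt κ hκ i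

theorem good_chain (κ : Cardinal.{u}) (hκ : ℵ₀ < κ) (hG : IsKappaEC κ G)
    (hH : IsKappaEC κ H) (e : κ.ord.ToType → G ⊕ H) (i : κ.ord.ToType) :
    GoodRel (chain κ hκ hG hH e i) := by
  induction i using WellFoundedLT.induction with
  | _ i IH =>
      have hdir : Directed (· ⊆ ·)
          (fun j : {j : κ.ord.ToType // j < i} => chain κ hκ hG hH e j.1) := by
        intro a b
        rcases le_total a.1 b.1 with hab | hba
        · exact ⟨b, chain_mono κ hκ hG hH e hab, subset_rfl⟩
        · exact ⟨a, subset_rfl, chain_mono κ hκ hG hH e hba⟩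
      have hU : GoodRel (uStage κ hκ hG hH e i) :=
        goodRel_iUnion hdir (fun j => IH j.1 j.2)
      rw [chain_eq]
      exact goodRel_step κ hκ hG hH hU (uStage_card κ hκ hG hH e i) (e i)

theorem good_uStage (κ : Cardinal.{u}) (hκ : ℵ₀ < κ) (hG : IsKappaEC κ G)
    (hH : IsKappaEC κ H) (e : κ.ord.ToType → G ⊕ H) (i : κ.ord.ToType) :
    GoodRel (uStage κ hκ hG hH e i) := by
  have hdir : Directed (· ⊆ ·)
      (fun j : {j : κ.ord.ToType // j < i} => chain κ hκ hG hH e j.1) := by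
    intro a b
    rcases le_total a.1 b.1 with hab | hba
    · exact ⟨b, chain_mono κ hκ hG hH e hab, subset_rfl⟩
    · exact ⟨a, subset_rfl, chain_mono κ hκ hG hH e hba⟩
  exact goodRel_iUnion hdir (fun j => good_chain κ hκ hG hH e j.1)

theorem exists_mem_chain_left (κ : Cardinal.{u}) (hκ : ℵ₀ < κ) (hG : IsKappaEC κ G)
    (hH : IsKappaEC κ H) (e : κ.ord.ToType → G ⊕ H) (i : κ.ord.ToType) (g : G)
    (hi : e i = Sum.inl g) : ∃ h, (g, h) ∈ chain κ hκ hG hH e i := by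
  rw [chain_eq, hi]
  exact mem_step_left κ hκ hG hH (good_uStage κ hκ hG hH e i) (uStage_card κ hκ hG hH e i) g

theorem exists_mem_chain_right (κ : Cardinal.{u}) (hκ : ℵ₀ < κ) (hG : IsKappaEC κ G)
    (hH : IsKappaEC κ H) (e : κ.ord.ToType → G ⊕ H) (i : κ.ord.ToType) (h : H)
    (hi : e i = Sum.inr h) : ∃ g, (g, h) ∈ chain κ hκ hG hH e i := by
  rw [chain_eq, hi]
  exact mem_step_right κ hκ hG hH (good_uStage κ hκ hG hH e i) (uStage_card κ hκ hG hH e i) h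

/-! ### From a total good relation to an isomorphism -/

theorem nonempty_mulEquiv_of_goodRel {R : Set (G × H)} (hR : GoodRel R)
    (htG : ∀ g : G, ∃ h, (g, h) ∈ R) (htH : ∀ h : H, ∃ g, (g, h) ∈ R) :
    Nonempty (G ≃* H) := by
  classical
  have key2 : ∀ {g : G} {h h' : H}, (g, h) ∈ R → (g, h') ∈ R → h = h' := by
    intro g h h' h1 h2
    have e1 : FreeGroup.lift (fun p : R => (p : G × H).1)
        (FreeGroup.of (⟨(g, h), h1⟩ : R) * (FreeGroup.of (⟨(g, h'), h2⟩ : R))⁻¹) = 1 := by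
      simp
    have e2 := (hR _).mp e1
    simp only [map_mul, map_inv, FreeGroup.lift_apply_of] at e2
    exact mul_inv_eq_one.mp e2
  have key2' : ∀ {g g' : G} {h : H}, (g, h) ∈ R → (g', h) ∈ R → g = g' := by
    intro g g' h h1 h2
    have e1 : FreeGroup.lift (fun p : R => (p : G × H).2)
        (FreeGroup.of (⟨(g, h), h1⟩ : R) * (FreeGroup.of (⟨(g', h), h2⟩ : R))⁻¹) = 1 := by
      simp
    have e2 := (hR _).mpr e1
    simp only [map_mul, map_inv, FreeGroup.lift_apply_of] at e2
    exact mul_inv_eq_one.mp e2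
  have key3 : ∀ {g1 g2 : G} {h1 h2 h3 : H},
      (g1, h1) ∈ R → (g2, h2) ∈ R → (g1 * g2, h3) ∈ R → h3 = h1 * h2 := by
    intro g1 g2 h1 h2 h3 m1 m2 m3
    have e1 : FreeGroup.lift (fun p : R => (p : G × H).1)
        (FreeGroup.of (⟨(g1, h1), m1⟩ : R) * FreeGroup.of (⟨(g2, h2), m2⟩ : R) *
          (FreeGroup.of (⟨(g1 * g2, h3), m3⟩ : R))⁻¹) = 1 := by
      simp only [map_mul, map_inv, FreeGroup.lift_apply_of]
      group
    have e2 := (hR _).mp e1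
    simp only [map_mul, map_inv, FreeGroup.lift_apply_of] at e2
    exact (mul_inv_eq_one.mp e2).symm
  choose f hf using htG
  choose finv hfinv using htH
  refine ⟨MulEquiv.mk' ⟨f, finv, ?_, ?_⟩ ?_⟩
  · intro g
    exact key2' (hfinv (f g)) (hf g)
  · intro h
    exact key2 (hf (finv h)) (hfinv h)
  · intro g1 g2
    exact key3 (hf g1) (hf g2) (hf (g1 * g2))

end Stmt8

theorem stmt_8 (κ : Cardinal.{u}) (hκ : Cardinal.aleph0 < κ)
    (G H : Type u) [Group G] [Group H] (hG : IsKappaEC κ G) (hH : IsKappaEC κ H)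
    (hGcard : Cardinal.mk G = κ) (hHcard : Cardinal.mk H = κ) :
    Nonempty (G ≃* H) := by
  classical
  have hmk : Cardinal.mk (κ.ord.ToType) = Cardinal.mk (G ⊕ H) := by
    have h1 : Cardinal.mk (κ.ord.ToType) = κ := Cardinal.mk_ord_toType κ
    rw [h1, Cardinal.mk_sum, Cardinal.lift_id, Cardinal.lift_id, hGcard, hHcard,
      Cardinal.add_eq_self hκ.le]
  obtain ⟨e⟩ := Cardinal.eq.mp hmk
  have hdir : Directed (· ⊆ ·) (Stmt8.chain κ hκ hG hH ⇑e) := by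
    intro a b
    rcases le_total a b with hab | hba
    · exact ⟨b, Stmt8.chain_mono κ hκ hG hH ⇑e hab, subset_rfl⟩
    · exact ⟨a, subset_rfl, Stmt8.chain_mono κ hκ hG hH ⇑e hba⟩
  have hgood : Stmt8.GoodRel (⋃ i, Stmt8.chain κ hκ hG hH ⇑e i) :=
    Stmt8.goodRel_iUnion hdir (fun i => Stmt8.good_chain κ hκ hG hH ⇑e i)
  refine Stmt8.nonempty_mulEquiv_of_goodRel hgood ?_ ?_
  · intro g
    obtain ⟨h, hh⟩ := Stmt8.exists_mem_chain_left κ hκ hG hH ⇑e (e.symm (Sum.inl g)) g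
      (e.apply_symm_apply _)
    exact ⟨h, Set.mem_iUnion.mpr ⟨_, hh⟩⟩
  · intro h
    obtain ⟨g, hg⟩ := Stmt8.exists_mem_chain_right κ hκ hG hH ⇑e (e.symm (Sum.inr h)) h
      (e.apply_symm_apply _)
    exact ⟨g, Set.mem_iUnion.mpr ⟨_, hg⟩⟩
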